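/- Let m ≥ 1 and let A₁, …, A_m be elements of 𝔄. Then for every positive integer n, ‖exp(∑_{j=1}^m A_j) − fₙ({A_j})‖ ≤ ((3^{m−1} + 1)/(6n²)) · (∑_{j=1}^m ‖A_j‖)³ · exp(∑_{j=1}^m ‖A_j‖). -/

import Mathlib

open Filter NormedSpace

/-- `fString 𝕜 A m n` is the symmetrized product string
`exp(A_m/(2n)) ⋯ exp(A₂/(2n)) · exp(A₁/n) · exp(A₂/(2n)) ⋯ exp(A_m/(2n))`,
where the elements are `A 1, …, A m`. -/
noncomputable def fString (𝕜 : Type*) [RCLike 𝕜] {𝔄 : Type*} [NormedRing 𝔄]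
    [NormedAlgebra 𝕜 𝔄] (A : ℕ → 𝔄) (m n : ℕ) : 𝔄 :=
  ((List.range' 2 (m - 1)).foldl
    (fun acc j => exp ((2 * n : 𝕜)⁻¹ • A j) * acc * exp ((2 * n : 𝕜)⁻¹ • A j))
    (exp ((n : 𝕜)⁻¹ • A 1)))

section SuzukiAux

open scoped Nat
set_option linter.unusedSectionVars false
set_option maxHeartbeats 1000000

variable {𝕜 : Type*} [RCLike 𝕜] {𝔄 : Type*} [NormedRing 𝔄] [NormedAlgebra 𝕜 𝔄]
  [CompleteSpace 𝔄]

lemma norm_factInv_smul_pow_le (x : 𝔄) {k : ℕ} (hk : k ≠ 0) :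
    ‖((k ! : 𝕜))⁻¹ • x ^ k‖ ≤ ‖x‖ ^ k / (k ! : ℝ) := by
  rw [norm_smul, norm_inv, RCLike.norm_natCast, div_eq_inv_mul]
  have h1 : ‖x ^ k‖ ≤ ‖x‖ ^ k := norm_pow_le' x (Nat.pos_of_ne_zero hk)
  have h2 : (0:ℝ) ≤ ((k ! : ℝ))⁻¹ := by positivity
  exact mul_le_mul_of_nonneg_left h1 h2

lemma real_exp_eq_tsum (t : ℝ) : Real.exp t = ∑' k : ℕ, t ^ k / (k ! : ℝ) := by
  rw [Real.exp_eq_exp_ℝ, exp_eq_tsum_div]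

lemma antidiagonal_pow_div_factorial (s t : ℝ) (k : ℕ) :
    ∑ p ∈ Finset.HasAntidiagonal.antidiagonal k, s ^ p.1 / (p.1 ! : ℝ) * (t ^ p.2 / (p.2 ! : ℝ)) =
      (s + t) ^ k / (k ! : ℝ) := by
  rw [Finset.Nat.sum_antidiagonal_eq_sum_range_succ_mk, add_pow, Finset.sum_div]
  refine Finset.sum_congr rfl fun i hi => ?_
  rw [Finset.mem_range, Nat.lt_succ_iff] at hi
  have h := Nat.choose_mul_factorial_mul_factorial hi
  have hℝ : ((k.choose i : ℝ)) * (i ! : ℝ) * ((k - i)! : ℝ) = (k ! : ℝ) := by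
    exact_mod_cast congrArg (fun z : ℕ => (z : ℝ)) h
  have hi0 : (0:ℝ) < (i ! : ℝ) := by positivity
  have hki0 : (0:ℝ) < ((k - i)! : ℝ) := by positivity
  have hk0 : (0:ℝ) < (k ! : ℝ) := by positivity
  field_simp
  linear_combination (-(s ^ i * t ^ (k - i))) * hℝ

lemma strang2 {𝕜 : Type*} [RCLike 𝕜] [NormedAlgebra 𝕜 𝔄] (x b : 𝔄) :
    ‖exp x * exp b * exp x - exp (x + b + x)‖ ≤
      (‖x‖ + ‖b‖ + ‖x‖) ^ 3 / 3 * Real.exp (‖x‖ + ‖b‖ + ‖x‖) := by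
  set u : ℝ := ‖x‖ + ‖b‖ + ‖x‖ with hu
  have hu0 : 0 ≤ u := by positivity
  set f : ℕ → 𝔄 := fun i => ((i ! : 𝕜))⁻¹ • x ^ i with hf
  set g : ℕ → 𝔄 := fun j => ((j ! : 𝕜))⁻¹ • b ^ j with hg
  set h : ℕ → 𝔄 := fun a => ∑ p ∈ Finset.HasAntidiagonal.antidiagonal a, f p.1 * g p.2 with hh
  set d : ℕ → 𝔄 := fun k => ∑ p ∈ Finset.HasAntidiagonal.antidiagonal k, h p.1 * f p.2 with hd
  set e : ℕ → 𝔄 := fun k => ((k ! : 𝕜))⁻¹ • (x + b + x) ^ k with he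
  have hfs : Summable fun i => ‖f i‖ := norm_expSeries_summable' x
  have hgs : Summable fun j => ‖g j‖ := norm_expSeries_summable' b
  have hhs : Summable fun a => ‖h a‖ :=
    summable_norm_sum_mul_antidiagonal_of_summable_norm hfs hgs
  have hds : Summable fun k => ‖d k‖ :=
    summable_norm_sum_mul_antidiagonal_of_summable_norm hhs hfs
  have hes : Summable fun k => ‖e k‖ := norm_expSeries_summable' _
  have hex : exp x = ∑' i, f i := by rw [exp_eq_tsum 𝕜]
  have heb : exp b = ∑' j, g j := by rw [exp_eq_tsum 𝕜]
  have h2 : exp x * exp b * exp x = ∑' k, d k := by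
    have h1 : exp x * exp b = ∑' a, h a := by
      rw [hex, heb]; exact tsum_mul_tsum_eq_tsum_sum_antidiagonal_of_summable_norm hfs hgs
    rw [h1, hex]
    exact tsum_mul_tsum_eq_tsum_sum_antidiagonal_of_summable_norm hhs hfs
  have h3 : exp (x + b + x) = ∑' k, e k := by rw [exp_eq_tsum 𝕜]
  -- pointwise facts
  have hf0 : f 0 = 1 := by simp [hf]
  have hg0 : g 0 = 1 := by simp [hg]
  have hh0 : h 0 = 1 := by
    simp [hh, hf0, hg0]
  have hFa : ∀ i : ℕ, i ≠ 0 → ‖f i‖ ≤ ‖x‖ ^ i / (i ! : ℝ) := fun i hi =>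
    norm_factInv_smul_pow_le x hi
  have hGa : ∀ j : ℕ, j ≠ 0 → ‖g j‖ ≤ ‖b‖ ^ j / (j ! : ℝ) := fun j hj =>
    norm_factInv_smul_pow_le b hj
  have hA : ∀ a : ℕ, a ≠ 0 → ‖h a‖ ≤ (‖x‖ + ‖b‖) ^ a / (a ! : ℝ) := by
    intro a ha
    have hle : ‖h a‖ ≤ ∑ p ∈ Finset.HasAntidiagonal.antidiagonal a,
        ‖x‖ ^ p.1 / (p.1 ! : ℝ) * (‖b‖ ^ p.2 / (p.2 ! : ℝ)) := by
      refine (norm_sum_le _ _).trans (Finset.sum_le_sum ?_)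
      rintro ⟨i, j⟩ hp
      rw [Finset.HasAntidiagonal.mem_antidiagonal] at hp
      dsimp only
      rcases Nat.eq_zero_or_pos i with rfl | hi
      · rw [hf0, one_mul]
        simp only [pow_zero, Nat.factorial_zero, Nat.cast_one, div_one, one_mul]
        exact hGa j (by omega)
      · rcases Nat.eq_zero_or_pos j with rfl | hj
        · rw [hg0, mul_one]
          simp only [pow_zero, Nat.factorial_zero, Nat.cast_one, div_one, mul_one]
          exact hFa i (by omega)
        · refine (norm_mul_le _ _).trans ?_
          exact mul_le_mul (hFa i (by omega)) (hGa j (by omega)) (norm_nonneg _)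
            (by positivity)
    exact hle.trans_eq (antidiagonal_pow_div_factorial _ _ a)
  have hB : ∀ k : ℕ, k ≠ 0 → ‖d k‖ ≤ u ^ k / (k ! : ℝ) := by
    intro k hk
    have hle : ‖d k‖ ≤ ∑ p ∈ Finset.HasAntidiagonal.antidiagonal k,
        (‖x‖ + ‖b‖) ^ p.1 / (p.1 ! : ℝ) * (‖x‖ ^ p.2 / (p.2 ! : ℝ)) := by
      refine (norm_sum_le _ _).trans (Finset.sum_le_sum ?_)
      rintro ⟨a, c⟩ hp
      rw [Finset.HasAntidiagonal.mem_antidiagonal] at hp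
      dsimp only
      rcases Nat.eq_zero_or_pos a with rfl | ha
      · rw [hh0, one_mul]
        simp only [pow_zero, Nat.factorial_zero, Nat.cast_one, div_one, one_mul]
        exact hFa c (by omega)
      · rcases Nat.eq_zero_or_pos c with rfl | hc
        · rw [hf0, mul_one]
          simp only [pow_zero, Nat.factorial_zero, Nat.cast_one, div_one, mul_one]
          exact hA a (by omega)
        · refine (norm_mul_le _ _).trans ?_
          exact mul_le_mul (hA a (by omega)) (hFa c (by omega)) (norm_nonneg _)
            (by positivity)
    exact hle.trans_eq (antidiagonal_pow_div_factorial _ _ k)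
  have hC : ∀ k : ℕ, k ≠ 0 → ‖e k‖ ≤ u ^ k / (k ! : ℝ) := by
    intro k hk
    rw [he]
    dsimp only
    rw [norm_smul, norm_inv, RCLike.norm_natCast, div_eq_inv_mul]
    refine mul_le_mul_of_nonneg_left ?_ (by positivity)
    refine (norm_pow_le' _ (Nat.pos_of_ne_zero hk)).trans ?_
    refine pow_le_pow_left₀ (norm_nonneg _) ?_ k
    exact (norm_add_le _ _).trans (add_le_add_left (norm_add_le x b) _)
  -- low-order coincidence
  have hde0 : d 0 = e 0 := by
    simp [hd, he, hh0, hf0]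
  have hf1 : f 1 = x := by simp [hf]
  have hg1 : g 1 = b := by simp [hg]
  have hh1 : h 1 = b + x := by
    rw [hh]
    dsimp only
    rw [Finset.Nat.sum_antidiagonal_eq_sum_range_succ_mk]
    simp [Finset.sum_range_succ, hf0, hg0, hf1, hg1]
  have hde1 : d 1 = e 1 := by
    rw [hd, he]
    dsimp only
    rw [Finset.Nat.sum_antidiagonal_eq_sum_range_succ_mk]
    simp only [Finset.sum_range_succ, Finset.sum_range_zero, zero_add]
    norm_num [hh0, hf0, hf1, hh1]
    abel
  have hf2 : f 2 = ((2 : 𝕜))⁻¹ • (x * x) := by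
    rw [hf]; norm_num [Nat.factorial]; rw [sq]
  have hg2 : g 2 = ((2 : 𝕜))⁻¹ • (b * b) := by
    rw [hg]; norm_num [Nat.factorial]; rw [sq]
  have hh2 : h 2 = ((2 : 𝕜))⁻¹ • (b * b) + x * b + ((2 : 𝕜))⁻¹ • (x * x) := by
    rw [hh]
    dsimp only
    rw [Finset.Nat.sum_antidiagonal_eq_sum_range_succ_mk]
    simp only [Finset.sum_range_succ, Finset.sum_range_zero, zero_add]
    norm_num [hf0, hg0, hf1, hg1, hf2, hg2]
  have hde2 : d 2 = e 2 := by
    rw [hd, he]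
    dsimp only
    rw [Finset.Nat.sum_antidiagonal_eq_sum_range_succ_mk]
    simp only [Finset.sum_range_succ, Finset.sum_range_zero, zero_add]
    norm_num [hh0, hf0, hf1, hf2, hh1, hh2, Nat.factorial]
    rw [sq]
    simp only [add_mul, mul_add, smul_add]
    module
  -- remainder estimate
  set T : ℕ → ℝ := fun k => if k ≤ 2 then 0 else 2 * (u ^ k / (k ! : ℝ)) with hT
  have hTs : Summable T := by
    refine Summable.of_nonneg_of_le (fun k => ?_) (fun k => ?_)
      ((Real.summable_pow_div_factorial u).mul_left 2)
    · rw [hT]; dsimp only; split <;> positivity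
    · rw [hT]; dsimp only; split
      · positivity
      · exact le_rfl
  have key : ∀ k, ‖d k - e k‖ ≤ T k := by
    intro k
    match k with
    | 0 => simp [hT, hde0]
    | 1 => simp [hT, hde1]
    | 2 => simp [hT, hde2]
    | (k+3) =>
      have hne : (k+3) ≠ 0 := by omega
      have hgt : ¬ (k + 3 ≤ 2) := by omega
      rw [hT]; dsimp only; rw [if_neg hgt]
      calc ‖d (k+3) - e (k+3)‖ ≤ ‖d (k+3)‖ + ‖e (k+3)‖ := norm_sub_le _ _
        _ ≤ u ^ (k+3) / ((k+3)! : ℝ) + u ^ (k+3) / ((k+3)! : ℝ) :=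
            add_le_add (hB _ hne) (hC _ hne)
        _ = 2 * (u ^ (k+3) / ((k+3)! : ℝ)) := by ring
  have hsub : Summable fun k => ‖d k - e k‖ :=
    Summable.of_nonneg_of_le (fun _ => norm_nonneg _) key hTs
  have hsum_T : ∑' k, T k ≤ u ^ 3 / 3 * Real.exp u := by
    have h6 : ∀ i : ℕ, T (i + 3) ≤ u ^ 3 / 3 * (u ^ i / (i ! : ℝ)) := by
      intro i
      have hfn : 6 * i ! ≤ (i+3)! := by
        have h1 := Nat.factorial_pos i
        have e3 : (i+3)! = (i+3) * ((i+2) * ((i+1) * i !)) := by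
          rw [show i + 3 = (i+2)+1 by omega, Nat.factorial_succ,
            show i + 2 = (i+1)+1 by omega, Nat.factorial_succ, Nat.factorial_succ]
        rw [e3]
        calc 6 * i ! = 3 * (2 * (1 * i !)) := by ring
          _ ≤ (i+3) * ((i+2) * ((i+1) * i !)) :=
            Nat.mul_le_mul (by omega) (Nat.mul_le_mul (by omega)
              (Nat.mul_le_mul (by omega) le_rfl))
      have hfact : (6 : ℝ) * (i ! : ℝ) ≤ ((i + 3)! : ℝ) := by exact_mod_cast hfn
      have hTv : T (i+3) = 2 * (u ^ (i+3) / ((i+3)! : ℝ)) := by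
        rw [hT]; dsimp only; rw [if_neg (by omega)]
      rw [hTv]
      have hp1 : (0:ℝ) < (i ! : ℝ) := by positivity
      have hp2 : (0:ℝ) < ((i+3)! : ℝ) := by positivity
      calc 2 * (u ^ (i+3) / ((i+3)! : ℝ)) ≤ 2 * (u ^ (i+3) / (6 * (i ! : ℝ))) := by
            gcongr
          _ = u ^ 3 / 3 * (u ^ i / (i ! : ℝ)) := by
            rw [pow_add]
            field_simp
            ring
    have h1 : Summable fun i => T (i + 3) := (summable_nat_add_iff 3).mpr hTs
    have hsm2 : Summable fun i : ℕ => u ^ 3 / 3 * (u ^ i / (i ! : ℝ)) :=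
      (Real.summable_pow_div_factorial u).mul_left _
    have hz : ∑ i ∈ Finset.range 3, T i = 0 := by
      rw [hT]; dsimp only; norm_num [Finset.sum_range_succ]
    calc ∑' k, T k = ∑ i ∈ Finset.range 3, T i + ∑' i, T (i+3) :=
          (hTs.sum_add_tsum_nat_add 3).symm
      _ = ∑' i, T (i+3) := by rw [hz, zero_add]
      _ ≤ ∑' i, u ^ 3 / 3 * (u ^ i / (i ! : ℝ)) := Summable.tsum_le_tsum h6 h1 hsm2
      _ = u ^ 3 / 3 * ∑' i, (u ^ i / (i ! : ℝ)) := tsum_mul_left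
      _ = u ^ 3 / 3 * Real.exp u := by rw [real_exp_eq_tsum]
  rw [h2, h3, ← Summable.tsum_sub hds.of_norm hes.of_norm]
  exact le_trans (norm_tsum_le_tsum_norm hsub)
    (le_trans (Summable.tsum_le_tsum key hsub hTs) hsum_T)


lemma norm_exp_mul_le {𝕜 : Type*} [RCLike 𝕜] [NormedAlgebra 𝕜 𝔄] (x w : 𝔄) : ‖exp x * w‖ ≤ Real.exp ‖x‖ * ‖w‖ := by
  have hsum : HasSum (fun k : ℕ => ((k ! : 𝕜))⁻¹ • x ^ k * w) (exp x * w) :=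
    (exp_series_hasSum_exp' x).mul_right w
  have hb : ∀ k : ℕ, ‖((k ! : 𝕜))⁻¹ • x ^ k * w‖ ≤ ‖x‖ ^ k / (k ! : ℝ) * ‖w‖ := by
    intro k
    cases k with
    | zero => simp
    | succ k =>
      refine (norm_mul_le _ _).trans ?_
      exact mul_le_mul_of_nonneg_right (norm_factInv_smul_pow_le x (Nat.succ_ne_zero k))
        (norm_nonneg w)
  have hg : HasSum (fun k : ℕ => ‖x‖ ^ k / (k ! : ℝ) * ‖w‖) (Real.exp ‖x‖ * ‖w‖) := by
    have h1 : Summable fun k : ℕ => ‖x‖ ^ k / (k ! : ℝ) := Real.summable_pow_div_factorial _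
    have := (h1.hasSum).mul_right ‖w‖
    rwa [← real_exp_eq_tsum] at this
  calc ‖exp x * w‖ = ‖∑' k : ℕ, ((k ! : 𝕜))⁻¹ • x ^ k * w‖ := by rw [hsum.tsum_eq]
    _ ≤ Real.exp ‖x‖ * ‖w‖ := tsum_of_norm_bounded hg hb

lemma norm_mul_exp_le {𝕜 : Type*} [RCLike 𝕜] [NormedAlgebra 𝕜 𝔄] (x w : 𝔄) : ‖w * exp x‖ ≤ ‖w‖ * Real.exp ‖x‖ := by
  have hsum : HasSum (fun k : ℕ => w * (((k ! : 𝕜))⁻¹ • x ^ k)) (w * exp x) :=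
    (exp_series_hasSum_exp' x).mul_left w
  have hb : ∀ k : ℕ, ‖w * (((k ! : 𝕜))⁻¹ • x ^ k)‖ ≤ ‖w‖ * (‖x‖ ^ k / (k ! : ℝ)) := by
    intro k
    cases k with
    | zero => simp
    | succ k =>
      refine (norm_mul_le _ _).trans ?_
      exact mul_le_mul_of_nonneg_left (norm_factInv_smul_pow_le x (Nat.succ_ne_zero k))
        (norm_nonneg w)
  have hg : HasSum (fun k : ℕ => ‖w‖ * (‖x‖ ^ k / (k ! : ℝ))) (‖w‖ * Real.exp ‖x‖) := by
    have h1 : Summable fun k : ℕ => ‖x‖ ^ k / (k ! : ℝ) := Real.summable_pow_div_factorial _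
    have := (h1.hasSum).mul_left ‖w‖
    rwa [← real_exp_eq_tsum] at this
  calc ‖w * exp x‖ = ‖∑' k : ℕ, w * (((k ! : 𝕜))⁻¹ • x ^ k)‖ := by rw [hsum.tsum_eq]
    _ ≤ ‖w‖ * Real.exp ‖x‖ := tsum_of_norm_bounded hg hb

lemma norm_mul_pow (S : 𝔄) (c : ℝ) (hc : ∀ w : 𝔄, ‖w * S‖ ≤ ‖w‖ * Real.exp c) :
    ∀ (k : ℕ) (w : 𝔄), ‖w * S ^ k‖ ≤ ‖w‖ * Real.exp (k * c) := by
  intro k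
  induction k with
  | zero => intro w; simp
  | succ k ih =>
    intro w
    have : w * S ^ (k + 1) = w * S ^ k * S := by rw [pow_succ, mul_assoc]
    rw [this]
    calc ‖w * S ^ k * S‖ ≤ ‖w * S ^ k‖ * Real.exp c := hc _
      _ ≤ ‖w‖ * Real.exp (k * c) * Real.exp c :=
          mul_le_mul_of_nonneg_right (ih w) (Real.exp_pos c).le
      _ = ‖w‖ * Real.exp ((k + 1 : ℕ) * c) := by
          rw [mul_assoc, ← Real.exp_add]; push_cast; ring_nf

lemma tele (E S : 𝔄) (c ε : ℝ) (hd : ‖E - S‖ ≤ ε)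
    (hE : ∀ w : 𝔄, ‖E * w‖ ≤ Real.exp c * ‖w‖)
    (hS : ∀ w : 𝔄, ‖w * S‖ ≤ ‖w‖ * Real.exp c) :
    ∀ k : ℕ, ‖E ^ k - S ^ k‖ ≤ k * Real.exp ((k - 1) * c) * ε := by
  have hε : (0:ℝ) ≤ ε := le_trans (norm_nonneg _) hd
  intro k
  induction k with
  | zero => simp
  | succ k ih =>
    have key : E ^ (k + 1) - S ^ (k + 1) = E * (E ^ k - S ^ k) + (E - S) * S ^ k := by
      rw [pow_succ', pow_succ']
      noncomm_ring
    calc ‖E ^ (k + 1) - S ^ (k + 1)‖ ≤ ‖E * (E ^ k - S ^ k)‖ + ‖(E - S) * S ^ k‖ := by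
          rw [key]; exact norm_add_le _ _
      _ ≤ Real.exp c * (k * Real.exp ((k - 1) * c) * ε) + ε * Real.exp (k * c) := by
          refine add_le_add ?_ ?_
          · exact (hE _).trans (mul_le_mul_of_nonneg_left ih (Real.exp_pos c).le)
          · exact (norm_mul_pow S c hS k (E - S)).trans
              (mul_le_mul_of_nonneg_right hd (Real.exp_pos _).le)
      _ ≤ (k + 1 : ℕ) * Real.exp (((k + 1 : ℕ) - 1) * c) * ε := by
          have h1 : Real.exp c * Real.exp ((k - 1 : ℝ) * c) = Real.exp ((k : ℝ) * c) := by
            rw [← Real.exp_add]; ring_nf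
          push_cast
          rw [add_sub_cancel_right]
          have h2 : Real.exp c * ((k : ℝ) * Real.exp ((k - 1 : ℝ) * c) * ε) =
              (k : ℝ) * Real.exp ((k : ℝ) * c) * ε := by rw [← h1]; ring
          rw [h2]; ring_nf; rfl

lemma fString_succ (A : ℕ → 𝔄) (m n : ℕ) (hm : 1 ≤ m) :
    fString 𝕜 A (m + 1) n =
      exp ((2 * n : 𝕜)⁻¹ • A (m + 1)) * fString 𝕜 A m n *
        exp ((2 * n : 𝕜)⁻¹ • A (m + 1)) := by
  unfold fString
  have h1 : m + 1 - 1 = (m - 1) + 1 := by omega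
  have h2 : 2 + (m - 1) = m + 1 := by omega
  rw [h1, List.range'_concat, List.foldl_append]
  simp only [one_mul, h2, List.foldl_cons, List.foldl_nil]

lemma norm_natInv_smul (n : ℕ) (x : 𝔄) : ‖((n : 𝕜))⁻¹ • x‖ = ‖x‖ / n := by
  rw [norm_smul, norm_inv, RCLike.norm_natCast, div_eq_inv_mul]

lemma norm_two_natInv_smul (n : ℕ) (x : 𝔄) :
    ‖((2 * n : 𝕜))⁻¹ • x‖ = ‖x‖ / (2 * n) := by
  rw [norm_smul, norm_inv, norm_mul, RCLike.norm_natCast, div_eq_inv_mul]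
  norm_num

lemma norm_mul_fString (A : ℕ → 𝔄) (n : ℕ) (hn : 0 < n) :
    ∀ m, 1 ≤ m → ∀ w : 𝔄,
      ‖w * fString 𝕜 A m n‖ ≤ ‖w‖ * Real.exp ((∑ j ∈ Finset.Icc 1 m, ‖A j‖) / n) := by
  intro m
  induction m with
  | zero => omega
  | succ m ih =>
    intro _ w
    rcases Nat.eq_zero_or_pos m with rfl | hm
    · have h1 : fString 𝕜 A 1 n = exp ((n : 𝕜)⁻¹ • A 1) := rfl
      rw [h1]
      refine (norm_mul_exp_le (𝕜 := 𝕜) _ w).trans ?_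
      rw [norm_natInv_smul]
      simp [Finset.Icc_self]
    · rw [fString_succ A m n hm]
      have hy : ‖((2 * n : 𝕜))⁻¹ • A (m+1)‖ = ‖A (m+1)‖ / (2 * n) :=
        norm_two_natInv_smul n (A (m+1))
      set y : 𝔄 := ((2 * n : 𝕜))⁻¹ • A (m+1) with hyd
      have assoc : w * (exp y * fString 𝕜 A m n * exp y)
          = ((w * exp y) * fString 𝕜 A m n) * exp y := by
        noncomm_ring
      rw [assoc]
      calc ‖((w * exp y) * fString 𝕜 A m n) * exp y‖
          ≤ ‖(w * exp y) * fString 𝕜 A m n‖ * Real.exp ‖y‖ := norm_mul_exp_le (𝕜 := 𝕜) _ _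
        _ ≤ (‖w * exp y‖ * Real.exp ((∑ j ∈ Finset.Icc 1 m, ‖A j‖) / n)) *
              Real.exp ‖y‖ := by
            refine mul_le_mul_of_nonneg_right (ih hm _) (Real.exp_pos _).le
        _ ≤ ((‖w‖ * Real.exp ‖y‖) * Real.exp ((∑ j ∈ Finset.Icc 1 m, ‖A j‖) / n)) *
              Real.exp ‖y‖ := by
            have := norm_mul_exp_le (𝕜 := 𝕜) y w
            gcongr
        _ = ‖w‖ * Real.exp ((∑ j ∈ Finset.Icc 1 (m+1), ‖A j‖) / n) := by
            rw [hy, Finset.sum_Icc_succ_top (by omega : 1 ≤ m + 1)]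
            rw [mul_assoc, mul_assoc, ← Real.exp_add, ← Real.exp_add]
            congr 2
            field_simp
            ring

lemma fString_estimate (A : ℕ → 𝔄) (n : ℕ) (hn : 0 < n) :
    ∀ m, 1 ≤ m →
      ‖fString 𝕜 A m n - exp ((n : 𝕜)⁻¹ • ∑ j ∈ Finset.Icc 1 m, A j)‖ ≤
        ((m - 1 : ℕ) : ℝ) * ((∑ j ∈ Finset.Icc 1 m, ‖A j‖) / n) ^ 3 / 3 *
          Real.exp ((∑ j ∈ Finset.Icc 1 m, ‖A j‖) / n) := by
  intro m
  induction m with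
  | zero => omega
  | succ m ih =>
    intro _
    rcases Nat.eq_zero_or_pos m with rfl | hm
    · have h1 : fString 𝕜 A 1 n = exp ((n : 𝕜)⁻¹ • A 1) := rfl
      rw [h1]
      simp [Finset.Icc_self]
    · have hnR : (0:ℝ) < (n:ℝ) := by exact_mod_cast hn
      set Bm := ∑ j ∈ Finset.Icc 1 m, A j with hBm
      set am := ∑ j ∈ Finset.Icc 1 m, ‖A j‖ with ham
      have ham0 : 0 ≤ am := Finset.sum_nonneg fun _ _ => norm_nonneg _
      have hBm_le : ‖Bm‖ ≤ am := norm_sum_le _ _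
      set y : 𝔄 := ((2 * n : 𝕜))⁻¹ • A (m+1) with hyd
      have hy : ‖y‖ = ‖A (m+1)‖ / (2*n) := norm_two_natInv_smul n (A (m+1))
      have hsumB : ∑ j ∈ Finset.Icc 1 (m+1), A j = Bm + A (m+1) :=
        Finset.sum_Icc_succ_top (by omega) _
      have hsuma : ∑ j ∈ Finset.Icc 1 (m+1), ‖A j‖ = am + ‖A (m+1)‖ :=
        Finset.sum_Icc_succ_top (by omega) _
      have h2n : ((2 * n : 𝕜))⁻¹ + ((2 * n : 𝕜))⁻¹ = (n:𝕜)⁻¹ := by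
        have hn𝕜 : (n:𝕜) ≠ 0 := Nat.cast_ne_zero.mpr hn.ne'
        rw [← two_mul, mul_inv, ← mul_assoc, mul_inv_cancel₀ (two_ne_zero), one_mul]
      have harg : (n:𝕜)⁻¹ • (Bm + A (m+1)) = y + (n:𝕜)⁻¹ • Bm + y := by
        rw [← h2n, hyd]
        module
      rw [fString_succ A m n hm, hsumB, hsuma, harg]
      set E : 𝔄 := exp ((n:𝕜)⁻¹ • Bm) with hE
      set S : 𝔄 := fString 𝕜 A m n with hS
      have split : exp y * S * exp y - exp (y + (n:𝕜)⁻¹ • Bm + y)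
          = exp y * (S - E) * exp y
            + (exp y * E * exp y - exp (y + (n:𝕜)⁻¹ • Bm + y)) := by
        noncomm_ring
      rw [split]
      set t : ℝ := (am + ‖A (m+1)‖) / n with htd
      have ht0 : 0 ≤ t := by positivity
      have hεt : ‖S - E‖ ≤ ((m - 1 : ℕ) : ℝ) * (am / n) ^ 3 / 3 * Real.exp (am / n) :=
        ih hm
      have hexp_eq : Real.exp ‖y‖ * Real.exp (am/n) * Real.exp ‖y‖ = Real.exp t := by
        rw [← Real.exp_add, ← Real.exp_add, hy, htd]
        congr 1
        field_simp
        ring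
      have hterm1 : ‖exp y * (S - E) * exp y‖
          ≤ ((m - 1 : ℕ) : ℝ) * t ^ 3 / 3 * Real.exp t := by
        calc ‖exp y * (S - E) * exp y‖
            ≤ ‖exp y * (S - E)‖ * Real.exp ‖y‖ := norm_mul_exp_le (𝕜 := 𝕜) _ _
          _ ≤ (Real.exp ‖y‖ * ‖S - E‖) * Real.exp ‖y‖ :=
              mul_le_mul_of_nonneg_right (norm_exp_mul_le (𝕜 := 𝕜) _ _) (Real.exp_pos _).le
          _ ≤ (Real.exp ‖y‖ * (((m - 1 : ℕ) : ℝ) * (am / n) ^ 3 / 3 *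
                Real.exp (am / n))) * Real.exp ‖y‖ := by gcongr
          _ = ((m - 1 : ℕ) : ℝ) * (am / n) ^ 3 / 3 *
                (Real.exp ‖y‖ * Real.exp (am/n) * Real.exp ‖y‖) := by ring
          _ = ((m - 1 : ℕ) : ℝ) * (am / n) ^ 3 / 3 * Real.exp t := by rw [hexp_eq]
          _ ≤ ((m - 1 : ℕ) : ℝ) * t ^ 3 / 3 * Real.exp t := by
              gcongr
              rw [htd]
              gcongr
              linarith [norm_nonneg (A (m+1))]
      have hu' : ‖y‖ + ‖(n:𝕜)⁻¹ • Bm‖ + ‖y‖ ≤ t := by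
        rw [hy, norm_natInv_smul, htd]
        have key : ‖A (m+1)‖/(2*(n:ℝ)) + am/(n:ℝ) + ‖A (m+1)‖/(2*(n:ℝ))
            = (am + ‖A (m+1)‖)/(n:ℝ) := by field_simp; ring
        rw [← key]
        gcongr
      have hterm2 : ‖exp y * E * exp y - exp (y + (n:𝕜)⁻¹ • Bm + y)‖
          ≤ t ^ 3 / 3 * Real.exp t := by
        refine (strang2 (𝕜 := 𝕜) y ((n:𝕜)⁻¹ • Bm)).trans ?_
        have h0 : 0 ≤ ‖y‖ + ‖(n:𝕜)⁻¹ • Bm‖ + ‖y‖ := by positivity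
        gcongr
      calc ‖exp y * (S - E) * exp y
            + (exp y * E * exp y - exp (y + (n:𝕜)⁻¹ • Bm + y))‖
          ≤ ‖exp y * (S - E) * exp y‖
            + ‖exp y * E * exp y - exp (y + (n:𝕜)⁻¹ • Bm + y)‖ := norm_add_le _ _
        _ ≤ ((m - 1 : ℕ) : ℝ) * t ^ 3 / 3 * Real.exp t + t ^ 3 / 3 * Real.exp t :=
            add_le_add hterm1 hterm2
        _ = (((m - 1 : ℕ) : ℝ) + 1) * t ^ 3 / 3 * Real.exp t := by ring
        _ = ((m + 1 - 1 : ℕ) : ℝ) * ((am + ‖A (m+1)‖) / n) ^ 3 / 3 *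
              Real.exp ((am + ‖A (m+1)‖) / n) := by
            rw [← htd]
            congr 2
            have : m + 1 - 1 = (m - 1) + 1 := by omega
            rw [this]
            push_cast
            ring

end SuzukiAux

lemma two_mul_le_aux (k : ℕ) : 2 * k ≤ 3 ^ k + 1 := by
  induction k with
  | zero => simp
  | succ k ih =>
    have h1 : 1 ≤ 3 ^ k := Nat.one_le_pow _ _ (by norm_num)
    have h3 : 3 ^ (k + 1) = 3 * 3 ^ k := by rw [pow_succ]; ring
    omega

theorem suzuki_fString_estimate_i (𝕜 : Type*) [RCLike 𝕜] {𝔄 : Type*} [NormedRing 𝔄]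
    [NormedAlgebra 𝕜 𝔄] [CompleteSpace 𝔄] (m : ℕ) (hm : 1 ≤ m) (A : ℕ → 𝔄)
    (n : ℕ) (hn : 0 < n) :
    ‖exp (∑ j ∈ Finset.Icc 1 m, A j) - (fString 𝕜 A m n) ^ n‖ ≤
      (((3 : ℝ) ^ (m - 1) + 1) / (6 * (n : ℝ) ^ 2)) * (∑ j ∈ Finset.Icc 1 m, ‖A j‖) ^ 3 *
        Real.exp (∑ j ∈ Finset.Icc 1 m, ‖A j‖) := by
  have hnR : (0:ℝ) < (n:ℝ) := by exact_mod_cast hn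
  have hn𝕜 : (n:𝕜) ≠ 0 := Nat.cast_ne_zero.mpr hn.ne'
  set B := ∑ j ∈ Finset.Icc 1 m, A j with hB
  set a := ∑ j ∈ Finset.Icc 1 m, ‖A j‖ with ha
  have ha0 : 0 ≤ a := Finset.sum_nonneg fun _ _ => norm_nonneg _
  have hBa : ‖B‖ ≤ a := norm_sum_le _ _
  set E : 𝔄 := exp ((n:𝕜)⁻¹ • B) with hE
  set S : 𝔄 := fString 𝕜 A m n with hS
  have hEn : exp B = E ^ n := by
    letI : NormedAlgebra ℚ 𝔄 := NormedAlgebra.restrictScalars ℚ 𝕜 𝔄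
    rw [hE, ← exp_nsmul, ← Nat.cast_smul_eq_nsmul 𝕜, smul_smul, mul_inv_cancel₀ hn𝕜,
      one_smul]
  set c : ℝ := a / n with hc
  have hEb : ∀ w : 𝔄, ‖E * w‖ ≤ Real.exp c * ‖w‖ := by
    intro w
    refine (norm_exp_mul_le (𝕜 := 𝕜) _ _).trans ?_
    have h1 : ‖(n:𝕜)⁻¹ • B‖ ≤ c := by
      rw [norm_natInv_smul, hc]
      gcongr
    exact mul_le_mul_of_nonneg_right (Real.exp_le_exp.mpr h1) (norm_nonneg w)
  have hSb : ∀ w : 𝔄, ‖w * S‖ ≤ ‖w‖ * Real.exp c := norm_mul_fString A n hn m hm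
  set ε : ℝ := ((m - 1 : ℕ) : ℝ) * c ^ 3 / 3 * Real.exp c with hε
  have hd : ‖E - S‖ ≤ ε := by
    rw [norm_sub_rev]
    exact fString_estimate A n hn m hm
  have htele := tele E S c ε hd hEb hSb n
  rw [hEn]
  refine htele.trans ?_
  have hexp : Real.exp (((n:ℝ)-1)*c) * Real.exp c = Real.exp a := by
    rw [← Real.exp_add]
    congr 1
    rw [hc]
    field_simp
    ring
  have hnc : (n:ℝ) * c ^ 3 = a ^ 3 / (n:ℝ)^2 := by
    rw [hc]
    field_simp
  have hLHS : (n:ℝ) * Real.exp (((n:ℝ)-1)*c) * ε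
      = ((m-1:ℕ):ℝ)/3 * (a^3/(n:ℝ)^2) * Real.exp a := by
    rw [hε]
    calc (n:ℝ) * Real.exp (((n:ℝ)-1)*c) * (((m-1:ℕ):ℝ) * c^3/3 * Real.exp c)
        = ((m-1:ℕ):ℝ)/3 * ((n:ℝ) * c^3) * (Real.exp (((n:ℝ)-1)*c) * Real.exp c) := by
          ring
      _ = ((m-1:ℕ):ℝ)/3 * (a^3/(n:ℝ)^2) * Real.exp a := by rw [hnc, hexp]
  rw [hLHS]
  have hRHS : ((3:ℝ)^(m-1)+1)/(6*(n:ℝ)^2) * a^3 * Real.exp a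
      = ((3:ℝ)^(m-1)+1)/6 * (a^3/(n:ℝ)^2) * Real.exp a := by ring
  rw [hRHS]
  have hcoef : ((m-1:ℕ):ℝ)/3 ≤ ((3:ℝ)^(m-1)+1)/6 := by
    have h1 := two_mul_le_aux (m-1)
    have h2 : (2:ℝ) * ((m-1:ℕ):ℝ) ≤ (3:ℝ)^(m-1) + 1 := by exact_mod_cast h1
    linarith
  gcongr
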